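/- For positive integers a ≤ b, the geometric thickness of K_{a,b} is at most ⌈a/2⌉. -/

import Mathlib

/-- A straight-line drawing of `G` in `k` layers: an injective placement of
vertices in the plane and an assignment of edges to layers such that two
distinct edges on the same layer meet only in shared endpoints. -/
def HasGeomDrawing {V : Type*} (G : SimpleGraph V) (k : ℕ) : Prop :=
  ∃ (pos : V → EuclideanSpace ℝ (Fin 2)) (layer : Sym2 V → Fin k),
    Function.Injective pos ∧
    ∀ u v x y : V, G.Adj u v → G.Adj x y → s(u, v) ≠ s(x, y) →
      layer s(u, v) = layer s(x, y) →
      segment ℝ (pos u) (pos v) ∩ segment ℝ (pos x) (pos y) ⊆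
        pos '' ({u, v} ∩ ({x, y} : Set V))

/-- The geometric thickness of a graph: the smallest number of layers in a
straight-line drawing with pairwise noncrossing edges in each layer. -/
noncomputable def geomThickness {V : Type*} (G : SimpleGraph V) : ℕ :=
  sInf {k | HasGeomDrawing G k}


noncomputable def P2 (x y : ℝ) : EuclideanSpace ℝ (Fin 2) := !₂[x, y]

lemma P2_ext {z : EuclideanSpace ℝ (Fin 2)} {x y : ℝ} (h0 : z 0 = x) (h1 : z 1 = y) :
    z = P2 x y := by
  ext i; fin_cases i <;> simpa [P2]

lemma P2_inj {x y x' y' : ℝ} (h : P2 x y = P2 x' y') : x = x' ∧ y = y' :=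
  ⟨by simpa [P2] using congrArg (· 0) h, by simpa [P2] using congrArg (· 1) h⟩

lemma seg_mem {x y x' y' : ℝ} {z : EuclideanSpace ℝ (Fin 2)}
    (hz : z ∈ segment ℝ (P2 x y) (P2 x' y')) :
    ∃ c d : ℝ, 0 ≤ c ∧ 0 ≤ d ∧ c + d = 1 ∧ z 0 = c*x + d*x' ∧ z 1 = c*y + d*y' := by
  obtain ⟨c, d, hc, hd, hcd, h⟩ := hz
  refine ⟨c, d, hc, hd, hcd, ?_, ?_⟩ <;> rw [← h] <;> simp [P2]

lemma lemA {h s t : ℝ} (hh : h ≠ 0) (hst : s ≠ t) {z : EuclideanSpace ℝ (Fin 2)}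
    (h1 : z ∈ segment ℝ (P2 0 h) (P2 s 0)) (h2 : z ∈ segment ℝ (P2 0 h) (P2 t 0)) :
    z = P2 0 h := by
  obtain ⟨c, d, hc, hd, hcd, hz0, hz1⟩ := seg_mem h1
  obtain ⟨c', d', hc', hd', hcd', hz0', hz1'⟩ := seg_mem h2
  have hch : c * h = c' * h := by linear_combination hz1' - hz1
  have hcc : c = c' := mul_right_cancel₀ hh hch
  have hdd : d = d' := by linarith
  have hd0 : d = 0 := by
    by_contra hne
    apply hst
    have hds : d * s = d * t := by
      rw [← hdd] at hz0'
      linear_combination hz0' - hz0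
    exact mul_left_cancel₀ hne hds
  have hc1 : c = 1 := by linarith
  exact P2_ext (by rw [hz0, hd0, hc1]; ring) (by rw [hz1, hd0, hc1]; ring)

lemma lemB {h k s t : ℝ} (hhk : h * k < 0) {z : EuclideanSpace ℝ (Fin 2)}
    (h1 : z ∈ segment ℝ (P2 0 h) (P2 s 0)) (h2 : z ∈ segment ℝ (P2 0 k) (P2 t 0)) :
    z = P2 s 0 ∧ z = P2 t 0 := by
  obtain ⟨c, d, hc, hd, hcd, hz0, hz1⟩ := seg_mem h1
  obtain ⟨c', d', hc', hd', hcd', hz0', hz1'⟩ := seg_mem h2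
  have hh : h ≠ 0 := by intro h0; rw [h0] at hhk; simp at hhk
  have hk0 : k ≠ 0 := by intro h0; rw [h0] at hhk; simp at hhk
  have hch : c * h = c' * k := by linear_combination hz1' - hz1
  have key : (c * h) * (c * h) ≤ 0 := by
    have h2 : (c * h) * (c * h) = c * c' * (h * k) := by nth_rewrite 2 [hch]; ring
    rw [h2]; exact mul_nonpos_of_nonneg_of_nonpos (mul_nonneg hc hc') hhk.le
  have hch0 : c * h = 0 := mul_self_eq_zero.1 (le_antisymm key (mul_self_nonneg _))
  have hc0 : c = 0 := by
    rcases mul_eq_zero.1 hch0 with h' | h'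
    · exact h'
    · exact absurd h' hh
  have hc0' : c' = 0 := by
    rcases mul_eq_zero.1 (hch ▸ hch0) with h' | h'
    · exact h'
    · exact absurd h' hk0
  have hd1 : d = 1 := by linarith
  have hd1' : d' = 1 := by linarith
  constructor
  · exact P2_ext (by rw [hz0, hc0, hd1]; ring) (by rw [hz1, hc0]; ring)
  · exact P2_ext (by rw [hz0', hc0', hd1']; ring) (by rw [hz1', hc0']; ring)

noncomputable def Ycoord (j : ℕ) : ℝ := if j % 2 = 0 then (j : ℝ) + 1 else -((j : ℝ) + 1)

lemma Ycoord_ne_zero (j : ℕ) : Ycoord j ≠ 0 := by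
  have hpos : (0 : ℝ) < (j : ℝ) + 1 := by positivity
  unfold Ycoord; split_ifs <;> intro h <;> linarith

lemma Ycoord_mul_neg {j j' : ℕ} (h : j % 2 ≠ j' % 2) : Ycoord j * Ycoord j' < 0 := by
  have h1 : (0 : ℝ) < (j : ℝ) + 1 := by positivity
  have h2 : (0 : ℝ) < (j' : ℝ) + 1 := by positivity
  unfold Ycoord
  rcases Nat.mod_two_eq_zero_or_one j with hj | hj <;>
    rcases Nat.mod_two_eq_zero_or_one j' with hj' | hj' <;>
      simp [hj, hj'] at h ⊢ <;> nlinarith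

lemma Ycoord_inj {j j' : ℕ} (h : Ycoord j = Ycoord j') : j = j' := by
  by_cases hpar : j % 2 = j' % 2
  · unfold Ycoord at h
    rcases Nat.mod_two_eq_zero_or_one j with hj | hj <;>
      have hj' : j' % 2 = j % 2 := hpar.symm <;>
      rw [hj] at hj' <;> simp [hj, hj'] at h <;> exact_mod_cast h
  · exfalso
    have := Ycoord_mul_neg hpar
    rw [h] at this
    nlinarith

lemma cross_case (j j' i i' : ℕ) (hj : j / 2 = j' / 2)
    (hne : j ≠ j' ∨ i ≠ i') {z : EuclideanSpace ℝ (Fin 2)}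
    (h1 : z ∈ segment ℝ (P2 0 (Ycoord j)) (P2 ((i : ℝ) + 1) 0))
    (h2 : z ∈ segment ℝ (P2 0 (Ycoord j')) (P2 ((i' : ℝ) + 1) 0)) :
    (j = j' ∧ z = P2 0 (Ycoord j)) ∨ (i = i' ∧ z = P2 ((i : ℝ) + 1) 0) := by
  rcases eq_or_ne j j' with rfl | hjj
  · left
    have hii : i ≠ i' := by tauto
    have hst : ((i : ℝ) + 1) ≠ ((i' : ℝ) + 1) := by
      intro h; exact hii (by exact_mod_cast (by linarith : (i : ℝ) = i'))
    exact ⟨rfl, lemA (Ycoord_ne_zero j) hst h1 h2⟩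
  · right
    have hpar : j % 2 ≠ j' % 2 := by omega
    obtain ⟨hz1, hz2⟩ := lemB (Ycoord_mul_neg hpar) h1 h2
    have heq : ((i : ℝ) + 1) = ((i' : ℝ) + 1) := (P2_inj (hz1.symm.trans hz2)).1
    have hii : i = i' := by exact_mod_cast (by linarith : (i : ℝ) = i')
    exact ⟨hii, hz1⟩


/-- For positive integers `a ≤ b`, the geometric thickness of the complete
bipartite graph `K_{a,b}` is at most `⌈a/2⌉`. -/
theorem stmt_12 (a b : ℕ) (ha : 0 < a) (hab : a ≤ b) :
    geomThickness (completeBipartiteGraph (Fin a) (Fin b)) ≤ ⌈(a : ℚ) / 2⌉₊ := by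
  set k := ⌈(a : ℚ) / 2⌉₊ with hkdef
  have hk1 : 0 < k := Nat.ceil_pos.2 (by positivity)
  have hk2 : a ≤ 2 * k := by
    have h := Nat.le_ceil ((a : ℚ) / 2)
    have : (a : ℚ) ≤ 2 * k := by linarith
    exact_mod_cast this
  refine Nat.sInf_le ?_
  refine ⟨Sum.elim (fun j : Fin a => P2 0 (Ycoord j)) (fun i : Fin b => P2 ((i : ℝ) + 1) 0),
    fun e => ⟨(Sym2.lift ⟨fun u v => Sum.elim (fun j : Fin a => (j : ℕ) / 2) (fun _ => 0) u
      + Sum.elim (fun j : Fin a => (j : ℕ) / 2) (fun _ => 0) v,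
      fun u v => Nat.add_comm _ _⟩ e) % k, Nat.mod_lt _ hk1⟩, ?_, ?_⟩
  · -- injectivity
    intro u v huv
    rcases u with j | i <;> rcases v with j' | i'
    · simp only [Sum.elim_inl] at huv
      exact congrArg Sum.inl (Fin.ext (Ycoord_inj (P2_inj huv).2))
    · exact absurd (P2_inj huv).2 (Ycoord_ne_zero _)
    · exact absurd (P2_inj huv).2.symm (Ycoord_ne_zero _)
    · simp only [Sum.elim_inr] at huv
      have := (P2_inj huv).1
      have : (i : ℕ) = (i' : ℕ) := by exact_mod_cast (by linarith : (i : ℝ) = i')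
      exact congrArg Sum.inr (Fin.ext this)
  · -- noncrossing
    have canon : ∀ (j j' : Fin a) (i i' : Fin b),
        (j : ℕ) / 2 = (j' : ℕ) / 2 →
        (s(Sum.inl j, Sum.inr i) : Sym2 (Fin a ⊕ Fin b)) ≠ s(Sum.inl j', Sum.inr i') →
        segment ℝ (P2 0 (Ycoord j)) (P2 ((i : ℝ) + 1) 0) ∩
          segment ℝ (P2 0 (Ycoord j')) (P2 ((i' : ℝ) + 1) 0) ⊆
        (Sum.elim (fun j : Fin a => P2 0 (Ycoord j)) (fun i : Fin b => P2 ((i : ℝ) + 1) 0)) ''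
          ({Sum.inl j, Sum.inr i} ∩ {Sum.inl j', Sum.inr i'}) := by
      intro j j' i i' hdiv hne z hz
      obtain ⟨h1, h2⟩ := hz
      have hne' : (j : ℕ) ≠ (j' : ℕ) ∨ (i : ℕ) ≠ (i' : ℕ) := by
        by_contra hc
        push_neg at hc
        exact hne (by rw [Fin.ext hc.1, Fin.ext hc.2])
      rcases cross_case j j' i i' hdiv hne' h1 h2 with ⟨hjj, hz⟩ | ⟨hii, hz⟩
      · have hj : j = j' := Fin.ext hjj
        exact ⟨Sum.inl j, ⟨by simp, by simp [hj]⟩, hz.symm⟩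
      · have hi : i = i' := Fin.ext hii
        exact ⟨Sum.inr i, ⟨by simp, by simp [hi]⟩, hz.symm⟩
    intro u v x y hadj1 hadj2 hne hlay
    have hdiv : ∀ (j j' : Fin a) (i i' : Fin b),
        ((Sym2.lift ⟨fun u v => Sum.elim (fun j : Fin a => (j : ℕ) / 2) (fun _ => 0) u
          + Sum.elim (fun j : Fin a => (j : ℕ) / 2) (fun _ => 0) v, fun u v => Nat.add_comm _ _⟩
          (s(Sum.inl j, Sum.inr i) : Sym2 (Fin a ⊕ Fin b))) % k : ℕ)
        = (Sym2.lift ⟨fun u v => Sum.elim (fun j : Fin a => (j : ℕ) / 2) (fun _ => 0) u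
          + Sum.elim (fun j : Fin a => (j : ℕ) / 2) (fun _ => 0) v, fun u v => Nat.add_comm _ _⟩
          (s(Sum.inl j', Sum.inr i') : Sym2 (Fin a ⊕ Fin b))) % k →
        (j : ℕ) / 2 = (j' : ℕ) / 2 := by
      intro j j' i i' h
      simp only [Sym2.lift_mk, Sum.elim_inl, Sum.elim_inr, Nat.add_zero] at h
      have hj : (j : ℕ) / 2 < k := by have := j.isLt; omega
      have hj' : (j' : ℕ) / 2 < k := by have := j'.isLt; omega
      rwa [Nat.mod_eq_of_lt hj, Nat.mod_eq_of_lt hj'] at h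
    rcases u with ju | iu <;> rcases v with jv | iv <;> simp only [completeBipartiteGraph_adj,
      Sum.isLeft_inl, Sum.isRight_inr, Sum.isLeft_inr, Sum.isRight_inl] at hadj1 <;>
      try (exfalso; tauto)
    all_goals rcases x with jx | ix <;> rcases y with jy | iy <;> simp only
      [completeBipartiteGraph_adj, Sum.isLeft_inl, Sum.isRight_inr, Sum.isLeft_inr,
       Sum.isRight_inl] at hadj2 <;> try (exfalso; tauto)
    · -- (inl ju, inr iv) vs (inl jx, inr iy)
      exact canon ju jx iv iy (hdiv _ _ _ _ (congrArg Fin.val hlay)) hne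
    · -- (inl ju, inr iv) vs (inr ix, inl jy)
      intro z hz
      obtain ⟨hz1, hz2⟩ := hz
      rw [segment_symm] at hz2
      rw [Set.pair_comm (Sum.inr ix) (Sum.inl jy)]
      rw [Sym2.eq_swap (a := Sum.inr ix)] at hne hlay
      exact canon ju jy iv ix (hdiv _ _ _ _ (congrArg Fin.val hlay)) hne ⟨hz1, hz2⟩
    · -- (inr iu, inl jv) vs (inl jx, inr iy)
      intro z hz
      obtain ⟨hz1, hz2⟩ := hz
      rw [segment_symm] at hz1
      rw [Set.pair_comm (Sum.inr iu) (Sum.inl jv)]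
      rw [Sym2.eq_swap (a := Sum.inr iu)] at hne hlay
      exact canon jv jx iu iy (hdiv _ _ _ _ (congrArg Fin.val hlay)) hne ⟨hz1, hz2⟩
    · -- (inr iu, inl jv) vs (inr ix, inl jy)
      intro z hz
      obtain ⟨hz1, hz2⟩ := hz
      rw [segment_symm] at hz1 hz2
      rw [Set.pair_comm (Sum.inr iu) (Sum.inl jv), Set.pair_comm (Sum.inr ix) (Sum.inl jy)]
      rw [Sym2.eq_swap (a := Sum.inr iu), Sym2.eq_swap (a := Sum.inr ix)] at hne hlay
      exact canon jv jy iu ix (hdiv _ _ _ _ (congrArg Fin.val hlay)) hne ⟨hz1, hz2⟩
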